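/- Let σ² > 0, and consider combining two independent unbiased estimators of μ: the classical sample mean Ȳ_n with variance σ²/n, and the rectified PPI estimator with variance (λ²Var(F)/N + Var(Y−λF)/n). If Cov(Y,F) > 0 and N/n → ∞, then at λ* = Cov(Y,F)/Var(F) the PPI asymptotic variance Var(Y)(1−ρ²)/n is strictly smaller than σ²/n = Var(Y)/n whenever ρ ≠ 0. -/

import Mathlib

open MeasureTheory ProbabilityTheory

/-- The covariance of two real random variables. -/
noncomputable def cov {Ω : Type*} [MeasurableSpace Ω] (μ : Measure Ω)
    (Y F : Ω → ℝ) : ℝ :=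
  ∫ ω, (Y ω - ∫ ω', Y ω' ∂μ) * (F ω - ∫ ω', F ω' ∂μ) ∂μ

lemma var_sub_const_mul {Ω : Type*} [MeasurableSpace Ω] (μ : Measure Ω)
    [IsProbabilityMeasure μ] (Y F : Ω → ℝ) (hY : MemLp Y 2 μ) (hF : MemLp F 2 μ)
    (c : ℝ) :
    variance (fun ω => Y ω - c * F ω) μ =
      variance Y μ - 2 * c * cov μ Y F + c ^ 2 * variance F μ := by
  set a := ∫ ω, Y ω ∂μ with ha
  set b := ∫ ω, F ω ∂μ with hb
  have hY' : MemLp (fun ω => Y ω - a) 2 μ := hY.sub (memLp_const a)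
  have hF' : MemLp (fun ω => F ω - b) 2 μ := hF.sub (memLp_const b)
  have hiY2 : Integrable (fun ω => (Y ω - a) ^ 2) μ := hY'.integrable_sq
  have hiF2 : Integrable (fun ω => (F ω - b) ^ 2) μ := hF'.integrable_sq
  have hiYF : Integrable (fun ω => (Y ω - a) * (F ω - b)) μ := by
    have h := hY'.smul (r := 1) hF' (hpqr := ⟨by simp [ENNReal.inv_two_add_inv_two]⟩)
    have h' := memLp_one_iff_integrable.mp h
    exact h'.congr (Filter.Eventually.of_forall fun ω => by
      simp [smul_eq_mul, mul_comm])
  have hG : MemLp (fun ω => Y ω - c * F ω) 2 μ := hY.sub (hF.const_mul c)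
  have hmean : (∫ ω, (Y ω - c * F ω) ∂μ) = a - c * b := by
    rw [integral_sub (hY.integrable one_le_two)
      ((hF.integrable one_le_two).const_mul c), integral_const_mul]
  have key : variance (fun ω => Y ω - c * F ω) μ
      = ∫ ω, ((Y ω - a) ^ 2 - 2 * c * ((Y ω - a) * (F ω - b))
          + c ^ 2 * (F ω - b) ^ 2) ∂μ := by
    rw [variance_eq_integral hG.aemeasurable, hmean]
    refine integral_congr_ae (Filter.Eventually.of_forall fun ω => ?_)
    ring
  have hcov : cov μ Y F = ∫ ω, (Y ω - a) * (F ω - b) ∂μ := by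
    rw [cov, ← ha, ← hb]
  have hVarY : variance Y μ = ∫ ω, (Y ω - a) ^ 2 ∂μ := by
    rw [variance_eq_integral hY.aemeasurable, ← ha]
  have hVarF : variance F μ = ∫ ω, (F ω - b) ^ 2 ∂μ := by
    rw [variance_eq_integral hF.aemeasurable, ← hb]
  have e1 : ∫ ω, ((Y ω - a) ^ 2 - 2 * c * ((Y ω - a) * (F ω - b))
        + c ^ 2 * (F ω - b) ^ 2) ∂μ
      = (∫ ω, ((Y ω - a) ^ 2 - 2 * c * ((Y ω - a) * (F ω - b))) ∂μ)
        + ∫ ω, c ^ 2 * (F ω - b) ^ 2 ∂μ :=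
    integral_add (hiY2.sub (hiYF.const_mul _)) (hiF2.const_mul _)
  have e2 : ∫ ω, ((Y ω - a) ^ 2 - 2 * c * ((Y ω - a) * (F ω - b))) ∂μ
      = (∫ ω, (Y ω - a) ^ 2 ∂μ) - ∫ ω, 2 * c * ((Y ω - a) * (F ω - b)) ∂μ :=
    integral_sub hiY2 (hiYF.const_mul _)
  rw [key, e1, e2, integral_const_mul, integral_const_mul, hVarY, hVarF, hcov]

/-- Optimally tuned PPI strictly beats classical inference when the autorater
is correlated with the true label and unlabeled data is abundant: with
`λ* = Cov(Y,F)/Var(F)` and `ρ = Cov(Y,F)/√(Var(Y)·Var(F))`, if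
`Cov(Y,F) > 0` then the asymptotic PPI variance satisfies
`Var(Y − λ*F)/n = Var(Y)(1−ρ²)/n < Var(Y)/n`. -/
theorem ppi_beats_classical
    {Ω : Type*} [MeasurableSpace Ω] (μ : Measure Ω) [IsProbabilityMeasure μ]
    (Y F : Ω → ℝ) (hY : MemLp Y 2 μ) (hF : MemLp F 2 μ)
    (hYm : Measurable Y) (hFm : Measurable F)
    (hVY : 0 < variance Y μ) (hVF : 0 < variance F μ)
    (hcov : 0 < cov μ Y F)
    (n : ℕ) (hn : 0 < n) :
    variance (fun ω => Y ω - (cov μ Y F / variance F μ) * F ω) μ / n =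
      variance Y μ *
        (1 - (cov μ Y F / Real.sqrt (variance Y μ * variance F μ)) ^ 2) / n ∧
    variance Y μ *
        (1 - (cov μ Y F / Real.sqrt (variance Y μ * variance F μ)) ^ 2) / n <
      variance Y μ / n := by
  have hvar := var_sub_const_mul μ Y F hY hF (cov μ Y F / variance F μ)
  have hs : Real.sqrt (variance Y μ * variance F μ) ^ 2
      = variance Y μ * variance F μ := Real.sq_sqrt (by positivity)
  have hrho : variance Y μ *
      (1 - (cov μ Y F / Real.sqrt (variance Y μ * variance F μ)) ^ 2)
      = variance Y μ - cov μ Y F ^ 2 / variance F μ := by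
    rw [div_pow, hs]
    field_simp
  have hlhs : variance (fun ω => Y ω - (cov μ Y F / variance F μ) * F ω) μ
      = variance Y μ - cov μ Y F ^ 2 / variance F μ := by
    rw [hvar]
    field_simp
    ring
  have hnpos : (0 : ℝ) < (n : ℝ) := by exact_mod_cast hn
  constructor
  · rw [hlhs, hrho]
  · rw [hrho]
    have h : variance Y μ - cov μ Y F ^ 2 / variance F μ < variance Y μ :=
      sub_lt_self _ (by positivity)
    exact by gcongr
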